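/- Let W > 0 and λ > 0. Suppose u : ℝ → ℝ is continuously differentiable on [−1,1] with u(−1) = u(1) = 0, u(x) ≥ −1 for all x ∈ [−1,1], u is twice differentiable at every x ∈ (−1,1) with u(x) > −1 and satisfies u''(x) = λ/(2·(1+u(x)+W)²) at such points, and the set {x ∈ [−1,1] : u(x) = −1} has positive Lebesgue measure. Then there exist −1 < b < a < 1 such that {x ∈ [−1,1] : u(x) = −1} = [b,a], u'(b) = u'(a) = 0, and u(x) > −1 for x ∈ [−1,b) ∪ (a,1]. -/

import Mathlib

open MeasureTheory

/-- Structure of the coincidence set of a zipped state: it is a closed interval `[b,a]`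
with `−1 < b < a < 1`, `u′(b) = u′(a) = 0`, and `u > −1` off `[b,a]`. -/
theorem stmt_14 (W lam : ℝ) (hW : 0 < W) (hlam : 0 < lam)
    (u u' : ℝ → ℝ)
    (hu : ∀ x ∈ Set.Icc (-1 : ℝ) 1, HasDerivWithinAt u (u' x) (Set.Icc (-1 : ℝ) 1) x)
    (hu'c : ContinuousOn u' (Set.Icc (-1 : ℝ) 1))
    (hum1 : u (-1) = 0) (hu1 : u 1 = 0)
    (hge : ∀ x ∈ Set.Icc (-1 : ℝ) 1, u x ≥ -1)
    (hu'' : ∀ x ∈ Set.Ioo (-1 : ℝ) 1, u x > -1 →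
      HasDerivAt u' (lam / (2 * (1 + u x + W) ^ 2)) x)
    (hzip : 0 < volume {x | x ∈ Set.Icc (-1 : ℝ) 1 ∧ u x = -1}) :
    ∃ b a : ℝ, -1 < b ∧ b < a ∧ a < 1 ∧
      {x | x ∈ Set.Icc (-1 : ℝ) 1 ∧ u x = -1} = Set.Icc b a ∧
      u' b = 0 ∧ u' a = 0 ∧
      ∀ x ∈ Set.Ico (-1 : ℝ) b ∪ Set.Ioc a 1, u x > -1 := by
  set S := Set.Icc (-1 : ℝ) 1 with hS
  have hc : ContinuousOn u S := fun x hx => (hu x hx).continuousWithinAt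
  set Z := {x | x ∈ S ∧ u x = -1} with hZdef
  have hZsub : Z ⊆ S := fun x hx => hx.1
  have hZclosed : IsClosed Z := by
    have hEq : Z = S ∩ u ⁻¹' {-1} := by ext x; simp [hZdef, Set.mem_inter_iff]
    rw [hEq]
    exact hc.preimage_isClosed_of_isClosed isClosed_Icc isClosed_singleton
  have hZcomp : IsCompact Z := isCompact_Icc.of_isClosed_subset hZclosed hZsub
  have hZne : Z.Nonempty := nonempty_of_measure_ne_zero hzip.ne'
  set b := sInf Z with hbdef
  set a := sSup Z with hadef
  have hbZ : b ∈ Z := hZcomp.sInf_mem hZne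
  have haZ : a ∈ Z := hZcomp.sSup_mem hZne
  have hba : b ≤ a := csInf_le_csSup hZne hZcomp.bddBelow hZcomp.bddAbove
  have hZIcc : Z ⊆ Set.Icc b a :=
    fun z hz => ⟨csInf_le hZcomp.bddBelow hz, le_csSup hZcomp.bddAbove hz⟩
  have hb1 : -1 < b := by
    rcases lt_or_eq_of_le hbZ.1.1 with h | h
    · exact h
    · exfalso
      have h2 : u b = -1 := hbZ.2
      rw [← h, hum1] at h2
      norm_num at h2
  have ha1 : a < 1 := by
    rcases lt_or_eq_of_le haZ.1.2 with h | h
    · exact h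
    · exfalso
      have h2 : u a = -1 := haZ.2
      rw [h, hu1] at h2
      norm_num at h2
  have hblta : b < a := by
    rcases hba.lt_or_eq with h | h
    · exact h
    · exfalso
      rw [← h] at hZIcc
      have h0 : volume Z ≤ volume (Set.Icc b b) := measure_mono hZIcc
      simp [Real.volume_Icc] at h0
      simp [h0] at hzip
  -- derivative vanishes at interior points of Z
  have hmin : ∀ z ∈ Z, -1 < z → z < 1 → u' z = 0 := by
    intro z hz hz1 hz2
    have hnhds : S ∈ nhds z := Icc_mem_nhds hz1 hz2
    have hder : HasDerivAt u (u' z) z := (hu z hz.1).hasDerivAt hnhds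
    have hlm : IsLocalMin u z := by
      filter_upwards [hnhds] with y hy
      rw [hz.2]; exact hge y hy
    exact hlm.hasDerivAt_eq_zero hder
  -- no gaps : if u = -1 at c < d and u > -1 on (c,d), contradiction
  have hgap : ∀ c d : ℝ, -1 < c → c < d → d < 1 → u c = -1 → u d = -1 →
      (∀ y ∈ Set.Ioo c d, u y > -1) → False := by
    intro c d hc1 hcd hd1 huc hud hpos
    have hcS : c ∈ S := ⟨hc1.le, (hcd.trans hd1).le⟩
    have hdS : d ∈ S := ⟨(hc1.trans hcd).le, hd1.le⟩
    have hsub : Set.Icc c d ⊆ S := Set.Icc_subset_Icc hc1.le hd1.le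
    have hmono : StrictMonoOn u' (Set.Icc c d) := by
      apply strictMonoOn_of_deriv_pos (convex_Icc c d) (hu'c.mono hsub)
      intro x hx
      rw [interior_Icc] at hx
      have hxI : x ∈ Set.Ioo (-1 : ℝ) 1 := ⟨hc1.trans hx.1, hx.2.trans hd1⟩
      have hpx := hpos x hx
      have hder := hu'' x hxI hpx
      rw [hder.deriv]
      have h1 : 0 < 1 + u x + W := by nlinarith
      positivity
    have h1 := hmono (Set.left_mem_Icc.2 hcd.le) (Set.right_mem_Icc.2 hcd.le) hcd
    rw [hmin c ⟨hcS, huc⟩ hc1 (hcd.trans hd1),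
        hmin d ⟨hdS, hud⟩ (hc1.trans hcd) hd1] at h1
    exact lt_irrefl 0 h1
  -- Z = Icc b a
  have hZeq : Z = Set.Icc b a := by
    apply Set.Subset.antisymm hZIcc
    intro x hx
    by_contra hxZ
    have hxS : x ∈ S := ⟨hb1.le.trans hx.1, hx.2.trans ha1.le⟩
    have hux : u x > -1 := lt_of_le_of_ne (hge x hxS) (fun h => hxZ ⟨hxS, h.symm⟩)
    have hbx : b < x := lt_of_le_of_ne hx.1 (by rintro rfl; exact hxZ hbZ)
    have hxa : x < a := lt_of_le_of_ne hx.2 (by rintro rfl; exact hxZ haZ)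
    set C := Z ∩ Set.Icc b x with hCdef
    have hCcomp : IsCompact C := hZcomp.inter_right isClosed_Icc
    have hCne : C.Nonempty := ⟨b, hbZ, Set.left_mem_Icc.2 hbx.le⟩
    set c := sSup C with hcdef
    have hcC : c ∈ C := hCcomp.sSup_mem hCne
    have hcx : c < x := lt_of_le_of_ne hcC.2.2 (fun h => by rw [h] at hcC; exact hxZ hcC.1)
    set D := Z ∩ Set.Icc x a with hDdef
    have hDcomp : IsCompact D := hZcomp.inter_right isClosed_Icc
    have hDne : D.Nonempty := ⟨a, haZ, Set.right_mem_Icc.2 hxa.le⟩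
    set d := sInf D with hddef
    have hdD : d ∈ D := hDcomp.sInf_mem hDne
    have hxd : x < d := lt_of_le_of_ne (hdD.2.1) (fun h => by rw [h] at hxZ; exact hxZ hdD.1)
    apply hgap c d (hb1.trans_le hcC.2.1) (hcx.trans hxd) (lt_of_le_of_lt hdD.2.2 ha1)
      hcC.1.2 hdD.1.2
    intro y hy
    by_contra hy1
    push_neg at hy1
    have hyS : y ∈ S :=
      ⟨((hb1.trans_le hcC.2.1).trans hy.1).le, (hy.2.trans_le (hdD.2.2.trans ha1.le)).le⟩
    have huy : u y = -1 := le_antisymm hy1 (hge y hyS)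
    have hyZ : y ∈ Z := ⟨hyS, huy⟩
    rcases le_or_gt y x with h | h
    · have hle : y ≤ c := le_csSup hCcomp.bddAbove ⟨hyZ, (hcC.2.1.trans hy.1.le), h⟩
      exact absurd hy.1 (not_lt.2 hle)
    · have hle : d ≤ y := csInf_le hDcomp.bddBelow ⟨hyZ, h.le, hy.2.le.trans hdD.2.2⟩
      exact absurd hy.2 (not_lt.2 hle)
  refine ⟨b, a, hb1, hblta, ha1, hZeq, hmin b hbZ hb1 (hblta.trans ha1),
    hmin a haZ (hb1.trans hblta) ha1, ?_⟩
  intro x hx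
  have hxS : x ∈ S := by
    rcases hx with h | h
    · exact ⟨h.1, (h.2.trans (hblta.trans ha1)).le⟩
    · exact ⟨((hb1.trans hblta).trans h.1).le.trans' (by linarith [hb1, hblta, h.1]), h.2⟩
  have hxZ : x ∉ Z := by
    intro hmem
    rw [hZeq] at hmem
    rcases hx with h | h
    · exact absurd hmem.1 (not_le.2 h.2)
    · exact absurd hmem.2 (not_le.2 h.1)
  exact lt_of_le_of_ne (hge x hxS) (fun h => hxZ ⟨hxS, h.symm⟩)
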